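/- In the 3-sequence, 4-period stepped-wedge design with one cluster per sequence, consider the ETI analysis of the previous setting with independence working correlation (γ = 0, i.e., V = I₁₂), so β̂ = (ZᵀZ)⁻¹Zᵀμ is the ordinary least squares estimator. Then ZᵀZ is invertible and the exposure time-averaged treatment effect estimator applied to the calendar time-varying truth satisfies (β̂_{δ_1} + β̂_{δ_2} + β̂_{δ_3})/3 = (6·ξ_2 + 7·ξ_3)/13; in particular both estimand weights 6/13 and 7/13 are nonnegative and sum to 1. -/

import Mathlib

open Matrix
set_option maxHeartbeats 2000000
set_option maxRecDepth 100000

/-- Design matrix of the exposure time indicator (ETI) model for the 3-sequence,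
4-period stepped-wedge design with one cluster per sequence. Rows are indexed by
`(i, j)` with cluster `i ∈ {1,2,3}` (coded `Fin 3`, value `i.val + 1`) and period
`j ∈ {1,2,3,4}` (coded `Fin 4`, value `j.val + 1`); columns `0,1,2` are the exposure
time indicators `δ₁, δ₂, δ₃` and columns `3,4,5,6` are the period indicators
`φ₁, φ₂, φ₃, φ₄`. -/
def ZETI : Matrix (Fin 3 × Fin 4) (Fin 7) ℝ := fun p c =>
  let i : ℕ := (p.1 : ℕ) + 1
  let j : ℕ := (p.2 : ℕ) + 1
  if (c : ℕ) < 3 then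
    (if i < j ∧ j - i = (c : ℕ) + 1 then 1 else 0)
  else
    (if j = (c : ℕ) - 2 then 1 else 0)

/-- Vector of marginal cell means under a true calendar time-varying treatment effect
structure: cell `(i,j)` has mean `1{j>i, 2≤j≤3}·ξ_j + φ_j`. -/
def muCal (ξ φ : ℕ → ℝ) : (Fin 3 × Fin 4) → ℝ := fun p =>
  let i : ℕ := (p.1 : ℕ) + 1
  let j : ℕ := (p.2 : ℕ) + 1
  (if i < j ∧ 2 ≤ j ∧ j ≤ 3 then ξ j else 0) + φ j

/-- The OLS coefficient vector `β̂ = (ZᵀZ)⁻¹Zᵀμ` of the ETI model with independence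
working correlation (`γ = 0`, `V = I₁₂`) applied to the marginal cell means `μ`. -/
noncomputable def betaETIols (ξ φ : ℕ → ℝ) : Fin 7 → ℝ :=
  (ZETIᵀ * ZETI)⁻¹ *ᵥ (ZETIᵀ *ᵥ muCal ξ φ)

/-- In the 3-sequence, 4-period stepped-wedge design with independence working
correlation, the misspecified ETATE (ETI-model OLS) estimator applied to a calendar
time-varying truth equals `(6ξ₂ + 7ξ₃)/13`; both estimand weights `6/13` and `7/13`
are nonnegative and sum to 1. -/
lemma ZtZ_eq : ZETIᵀ * ZETI =
    !![3,0,0,0,1,1,1; 0,2,0,0,0,1,1; 0,0,1,0,0,0,1; 0,0,0,3,0,0,0;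
       1,0,0,0,3,0,0; 1,1,0,0,0,3,0; 1,1,1,0,0,0,3] := by
  ext a b
  fin_cases a <;> fin_cases b <;>
    norm_num [Matrix.mul_apply, ZETI, Fintype.sum_prod_type, Fin.sum_univ_succ] <;> norm_num (config := {decide := true})

noncomputable def AinvETI : Matrix (Fin 7) (Fin 7) ℝ :=
  !![21/26, 15/26, 9/13, 0, -7/26, -6/13, -9/13;
     15/26, 33/26, 12/13, 0, -5/26, -8/13, -12/13;
     9/13, 12/13, 30/13, 0, -3/13, -7/13, -17/13;
     0, 0, 0, 1/3, 0, 0, 0;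
     -7/26, -5/26, -3/13, 0, 11/26, 2/13, 3/13;
     -6/13, -8/13, -7/13, 0, 2/13, 9/13, 7/13;
     -9/13, -12/13, -17/13, 0, 3/13, 7/13, 17/13]

lemma ZtZ_inv : (ZETIᵀ * ZETI) * AinvETI = 1 := by
  rw [ZtZ_eq]
  ext a b
  fin_cases a <;> fin_cases b <;>
    norm_num [AinvETI, Matrix.mul_apply, Fin.sum_univ_succ, Matrix.one_apply, Fin.ext_iff]

lemma ZtZ_det : IsUnit (ZETIᵀ * ZETI).det :=
  Matrix.isUnit_det_of_right_inverse ZtZ_inv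


noncomputable def bsol (ξ φ : ℕ → ℝ) : Fin 7 → ℝ :=
  ![(7*ξ 2 + 6*ξ 3)/13, (5*ξ 2 + 8*ξ 3)/13, (6*ξ 2 + 7*ξ 3)/13, φ 1,
    (2*ξ 2 - 2*ξ 3)/13 + φ 2, (-4*ξ 2 + 4*ξ 3)/13 + φ 3, (-6*ξ 2 - 7*ξ 3)/13 + φ 4]

lemma cardA1 : (Finset.filter (fun x : Fin 3 => (x:ℕ) = 0 ∧ 2 - ((x:ℕ) + 1) = 1) Finset.univ).card = 1 := by decide
lemma cardA2 : (Finset.filter (fun x : Fin 3 => (x:ℕ) = 0 ∧ 2 - ((x:ℕ) + 1) = 2) Finset.univ).card = 0 := by decide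
lemma cardA3 : (Finset.filter (fun x : Fin 3 => (x:ℕ) = 0 ∧ 2 - ((x:ℕ) + 1) = 3) Finset.univ).card = 0 := by decide
lemma cardB1 : (Finset.filter (fun x : Fin 3 => (x:ℕ) < 2 ∧ 3 - ((x:ℕ) + 1) = 1) Finset.univ).card = 1 := by decide
lemma cardB2 : (Finset.filter (fun x : Fin 3 => (x:ℕ) < 2 ∧ 3 - ((x:ℕ) + 1) = 2) Finset.univ).card = 1 := by decide
lemma cardB3 : (Finset.filter (fun x : Fin 3 => (x:ℕ) < 2 ∧ 3 - ((x:ℕ) + 1) = 3) Finset.univ).card = 0 := by decide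
lemma cardC1 : (Finset.filter (fun x : Fin 3 => 4 - ((x:ℕ) + 1) = 1) Finset.univ).card = 1 := by decide
lemma cardC2 : (Finset.filter (fun x : Fin 3 => 4 - ((x:ℕ) + 1) = 2) Finset.univ).card = 1 := by decide
lemma cardC3 : (Finset.filter (fun x : Fin 3 => 4 - ((x:ℕ) + 1) = 3) Finset.univ).card = 1 := by decide

lemma key (ξ φ : ℕ → ℝ) : (ZETIᵀ * ZETI) *ᵥ bsol ξ φ = ZETIᵀ *ᵥ muCal ξ φ := by
  funext k
  fin_cases k <;>
    (norm_num (config := {decide := true}) [-Finset.sum_boole, Matrix.mulVec, dotProduct, Matrix.mul_apply, bsol, ZETI, muCal,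
      Fintype.sum_prod_type, Fin.sum_univ_succ, cardA1, cardA2, cardA3, cardB1, cardB2,
      cardB3, cardC1, cardC2, cardC3]; try ring)

lemma beta_eq (ξ φ : ℕ → ℝ) : betaETIols ξ φ = bsol ξ φ := by
  have hu := ZtZ_det
  rw [betaETIols, ← key, Matrix.mulVec_mulVec, Matrix.nonsing_inv_mul _ hu, Matrix.one_mulVec]

theorem ETATE_ols_estimator_calendar_truth (ξ φ : ℕ → ℝ) :
    IsUnit (ZETIᵀ * ZETI).det ∧
    (betaETIols ξ φ 0 + betaETIols ξ φ 1 + betaETIols ξ φ 2) / 3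
      = (6 * ξ 2 + 7 * ξ 3) / 13 ∧
    (0 ≤ (6 : ℝ) / 13 ∧ 0 ≤ (7 : ℝ) / 13 ∧ (6 : ℝ) / 13 + 7 / 13 = 1) := by
  refine ⟨ZtZ_det, ?_, by norm_num, by norm_num, by norm_num⟩
  simp [beta_eq, bsol]
  ring
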